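/- Negative drift of log g_0: with L_0 = 5√(2π), for n large enough, (log g_0)'(x) ≤ −x/2 for all x ∈ [0, √(2·log(λ_0/L_0))]. -/

import Mathlib

/-!
Statement 16: negative drift of log g₀.
-/

open MeasureTheory Real Set

noncomputable section

/-- Standard normal density. -/
def phi (x : ℝ) : ℝ := Real.exp (-x ^ 2 / 2) / Real.sqrt (2 * Real.pi)

/-- Spike inverse-scale `λ₀ = 5√(2π) n`. -/
def lam0 (n : ℕ) : ℝ := 5 * Real.sqrt (2 * Real.pi) * n

/-- Slab scale parameter `λ₁ = 0.05`. -/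
def lam1 : ℝ := 0.05

/-- Spike density: Laplace with parameter `λ₀`. -/
def gamma0 (n : ℕ) (x : ℝ) : ℝ := lam0 n / 2 * Real.exp (-(lam0 n) * |x|)

/-- Slab density: Cauchy with scale `1/λ₁`. -/
def gamma1 (x : ℝ) : ℝ := lam1 / Real.pi * (1 + lam1 ^ 2 * x ^ 2)⁻¹

/-- `g₀ = φ * γ₀`. -/
def g0 (n : ℕ) (x : ℝ) : ℝ := ∫ u, phi (x - u) * gamma0 n u

/-- `g₁ = φ * γ₁`. -/
def g1 (x : ℝ) : ℝ := ∫ u, phi (x - u) * gamma1 u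

/-- `β(x) = g₁(x)/g₀(x) - 1` for the SSL prior. -/
def betaSSL (n : ℕ) (x : ℝ) : ℝ := g1 x / g0 n x - 1

/-! ### Auxiliary lemmas -/

lemma sqrt_two_pi_ge_two : (2:ℝ) ≤ Real.sqrt (2 * Real.pi) := by
  have h4 : ((2:ℝ))^2 ≤ 2 * Real.pi := by nlinarith [Real.pi_gt_three]
  nlinarith [Real.sq_sqrt (by positivity : (0:ℝ) ≤ 2 * Real.pi),
    Real.sqrt_nonneg (2 * Real.pi)]

lemma phi_pos (t : ℝ) : 0 < phi t := by
  unfold phi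
  have := sqrt_two_pi_ge_two
  positivity

lemma exp_neg_sq_le_one (t : ℝ) : Real.exp (-t ^ 2 / 2) ≤ 1 :=
  Real.exp_le_one_iff.mpr (by nlinarith [sq_nonneg t])

lemma phi_le_one (t : ℝ) : phi t ≤ 1 := by
  unfold phi
  rw [div_le_one (by linarith [sqrt_two_pi_ge_two])]
  linarith [exp_neg_sq_le_one t, sqrt_two_pi_ge_two]

lemma abs_mul_phi_le_one (t : ℝ) : |t| * phi t ≤ 1 := by
  have h1 : |t| ≤ Real.exp (t ^ 2 / 2) := by
    have := Real.add_one_le_exp (t ^ 2 / 2)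
    nlinarith [sq_abs t, sq_nonneg (|t| - 1)]
  have h2 : |t| * Real.exp (-t ^ 2 / 2) ≤ 1 := by
    have hinv : Real.exp (-t^2/2) * Real.exp (t^2/2) = 1 := by
      rw [← Real.exp_add]; ring_nf; exact Real.exp_zero
    nlinarith [mul_le_mul_of_nonneg_right h1 (Real.exp_pos (-t^2/2)).le]
  unfold phi
  have h3 : Real.exp (-t ^ 2 / 2) / Real.sqrt (2 * Real.pi) ≤ Real.exp (-t ^ 2 / 2) :=
    div_le_self (Real.exp_pos _).le (by linarith [sqrt_two_pi_ge_two])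
  calc |t| * (Real.exp (-t ^ 2 / 2) / Real.sqrt (2 * Real.pi)) ≤ |t| * Real.exp (-t^2/2) :=
        mul_le_mul_of_nonneg_left h3 (abs_nonneg t)
    _ ≤ 1 := h2

lemma hasDerivAt_phi (t : ℝ) : HasDerivAt phi (-t * phi t) t := by
  have h : HasDerivAt (fun s : ℝ => -s ^ 2 / 2) (-t) t := by
    have := ((hasDerivAt_pow 2 t).neg).div_const 2
    convert this using 1 <;> try rfl
    simp; ring
  have h2 := (h.exp).div_const (Real.sqrt (2 * Real.pi))
  convert h2 using 1 <;> try rfl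
  unfold phi; ring

lemma hasDerivAt_phi_sub (u x : ℝ) :
    HasDerivAt (fun y => phi (y - u)) (-(x - u) * phi (x - u)) x := by
  convert (hasDerivAt_phi (x - u)).comp x ((hasDerivAt_id x).sub_const u) using 1 <;> try rfl
  simp

lemma continuous_phi : Continuous phi := by
  unfold phi
  exact (((continuous_pow 2).neg.div_const 2).rexp).div_const _

/-! ### Exponential integrals -/

lemma integrableOn_eab_Ioi {b : ℝ} (hb : 0 < b) :
    IntegrableOn (fun u : ℝ => Real.exp (-b * |u|)) (Set.Ioi 0) := by
  apply (exp_neg_integrableOn_Ioi 0 hb).congr_fun ?_ measurableSet_Ioi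
  intro u hu
  show Real.exp (-b * u) = Real.exp (-b * |u|)
  rw [abs_of_pos hu]

lemma integrableOn_eab_Iic {b : ℝ} (hb : 0 < b) :
    IntegrableOn (fun u : ℝ => Real.exp (-b * |u|)) (Set.Iic 0) := by
  have h2 : IntegrableOn (fun u : ℝ => Real.exp (-b * |u|)) (Set.Ici 0) := by
    rw [integrableOn_Ici_iff_integrableOn_Ioi]; exact integrableOn_eab_Ioi hb
  have h3 := (MeasurePreserving.integrableOn_comp_preimage
    (Measure.measurePreserving_neg (volume : Measure ℝ))
    (Homeomorph.neg ℝ).measurableEmbedding).2 h2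
  have hpre : (Neg.neg ⁻¹' (Set.Ici (0:ℝ))) = Set.Iic 0 := by
    ext y; simp
  rw [hpre] at h3
  apply h3.congr_fun ?_ measurableSet_Iic
  intro u _
  simp [abs_neg]

lemma integrable_eab {b : ℝ} (hb : 0 < b) :
    Integrable (fun u : ℝ => Real.exp (-b * |u|)) := by
  rw [← integrableOn_univ, ← Set.Iic_union_Ioi (a := (0:ℝ))]
  exact (integrableOn_eab_Iic hb).union (integrableOn_eab_Ioi hb)

lemma integral_exp_neg_mul_Ioi {b : ℝ} (hb : 0 < b) :
    ∫ u in Set.Ioi (0:ℝ), Real.exp (-b * u) = 1 / b := by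
  have hderiv : ∀ t ∈ Set.Ici (0:ℝ),
      HasDerivAt (fun u : ℝ => -Real.exp (-b * u) / b) (Real.exp (-b * t)) t := by
    intro t _
    have h := (((hasDerivAt_id t).const_mul (-b)).exp).neg.div_const b
    convert h using 1 <;> try rfl
    field_simp
    rfl
  have htend : Filter.Tendsto (fun u : ℝ => -Real.exp (-b * u) / b) Filter.atTop (nhds 0) := by
    have h1 : Filter.Tendsto (fun u : ℝ => -b * u) Filter.atTop Filter.atBot :=
      Filter.tendsto_id.const_mul_atTop_of_neg (by linarith)
    have h2 := (Real.tendsto_exp_atBot).comp h1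
    have := (h2.neg).div_const b
    simpa using this
  have := integral_Ioi_of_hasDerivAt_of_tendsto' hderiv
    (exp_neg_integrableOn_Ioi 0 hb) htend
  rw [this]
  simp [Real.exp_zero]
  ring

lemma integral_eab {b : ℝ} (hb : 0 < b) :
    ∫ u : ℝ, Real.exp (-b * |u|) = 2 / b := by
  have key := intervalIntegral.integral_Iic_add_Ioi (f := fun u : ℝ => Real.exp (-b * |u|))
    (integrableOn_eab_Iic hb) (integrableOn_eab_Ioi hb)
  have h1 : ∫ u in Set.Ioi (0:ℝ), Real.exp (-b * |u|) = 1 / b := by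
    rw [setIntegral_congr_fun measurableSet_Ioi
      (fun u (hu : u ∈ Set.Ioi (0:ℝ)) => by rw [abs_of_pos hu]),
      integral_exp_neg_mul_Ioi hb]
  have h2 : ∫ u in Set.Iic (0:ℝ), Real.exp (-b * |u|) = 1 / b := by
    have := integral_comp_neg_Iic (c := (0:ℝ)) (f := fun u : ℝ => Real.exp (-b * |u|))
    simp only [abs_neg, neg_zero] at this
    rw [this]; exact h1
  rw [h2, h1] at key
  have key2 : (1:ℝ)/b + 1/b = ∫ u : ℝ, Real.exp (-b * |u|) := key
  rw [← key2]
  ring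

/-! ### Pointwise inequalities -/

lemma abs_le_exp_abs (t : ℝ) : |t| ≤ Real.exp |t| := by
  have := Real.add_one_le_exp |t|
  linarith

lemma sq_le_four_mul_exp {t : ℝ} (ht : 0 ≤ t) : t ^ 2 ≤ 4 * Real.exp t := by
  have h1 := Real.add_one_le_exp (t / 2)
  have h2 : Real.exp (t/2) * Real.exp (t/2) = Real.exp t := by
    rw [← Real.exp_add]; ring_nf
  nlinarith [Real.exp_pos (t/2)]

lemma phi_add_eq (x u : ℝ) : phi (x + u) = phi (x - u) * Real.exp (-(2 * x * u)) := by
  unfold phi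
  rw [div_mul_eq_mul_div, ← Real.exp_add]
  congr 2
  ring

/-- Key pointwise inequality for the symmetrized posterior-mean integrand. -/
lemma key_pointwise {x : ℝ} (hx : 0 ≤ x) (u : ℝ) :
    u * (phi (x - u) - phi (x + u)) ≤ 2 * x * u ^ 2 * (phi (x - u) + phi (x + u)) := by
  have hb := phi_add_eq x u
  have hap : 0 < phi (x - u) := phi_pos _
  have hbp : 0 < phi (x + u) := phi_pos _
  rcases le_or_gt 0 u with hu | hu
  · have h1 : 1 - Real.exp (-(2 * x * u)) ≤ 2 * x * u := by
      have := Real.add_one_le_exp (-(2 * x * u))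
      linarith
    nlinarith [mul_le_mul_of_nonneg_left h1 (mul_nonneg hu hap.le),
      mul_nonneg (mul_nonneg hx (mul_nonneg hu hu)) hbp.le]
  · have ha' : phi (x - u) = phi (x + u) * Real.exp (2 * x * u) := by
      rw [hb, mul_assoc, ← Real.exp_add]
      simp
    have h1 : 1 - Real.exp (2 * x * u) ≤ -(2 * x * u) := by
      have := Real.add_one_le_exp (2 * x * u)
      linarith
    have hnu : 0 ≤ -u := by linarith
    nlinarith [mul_le_mul_of_nonneg_left h1 (mul_nonneg hnu hbp.le),
      mul_nonneg (mul_nonneg hx (mul_nonneg hnu hnu)) hap.le]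

lemma phi_sub_le {x : ℝ} (hx : 0 ≤ x) (u : ℝ) :
    phi (x - u) ≤ phi x * Real.exp (x * |u|) := by
  unfold phi
  rw [div_mul_eq_mul_div, ← Real.exp_add]
  gcongr
  nlinarith [mul_le_mul_of_nonneg_left (le_abs_self u) hx, sq_nonneg u]

lemma phi_sub_ge {x u : ℝ} (hx : 0 ≤ x) (hu0 : 0 ≤ u) (hu1 : u ≤ 1) :
    phi x / 2 ≤ phi (x - u) := by
  have hhalf : (1:ℝ)/2 ≤ Real.exp (-(1:ℝ)/2) := by
    have h2 : Real.exp ((1:ℝ)/2) * Real.exp ((1:ℝ)/2) = Real.exp 1 := by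
      rw [← Real.exp_add]; norm_num
    have h3 : Real.exp 1 < 2.7182818286 := Real.exp_one_lt_d9
    have h4 : Real.exp ((1:ℝ)/2) < 2 := by nlinarith [Real.exp_pos ((1:ℝ)/2)]
    have h5 : Real.exp (-(1:ℝ)/2) * Real.exp ((1:ℝ)/2) = 1 := by
      rw [← Real.exp_add]; norm_num
    nlinarith [Real.exp_pos (-(1:ℝ)/2)]
  have key : phi x * Real.exp (-(1:ℝ)/2) ≤ phi (x - u) := by
    unfold phi
    rw [div_mul_eq_mul_div, ← Real.exp_add]
    gcongr
    nlinarith [mul_nonneg hx hu0]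
  calc phi x / 2 = phi x * (1/2) := by ring
    _ ≤ phi x * Real.exp (-(1:ℝ)/2) := by
        exact mul_le_mul_of_nonneg_left hhalf (phi_pos x).le
    _ ≤ phi (x - u) := key

lemma gamma0_neg (n : ℕ) (u : ℝ) : gamma0 n (-u) = gamma0 n u := by
  unfold gamma0; rw [abs_neg]

lemma gamma0_nonneg (n : ℕ) (u : ℝ) : 0 ≤ gamma0 n u := by
  have : (0:ℝ) ≤ lam0 n := by unfold lam0; positivity
  unfold gamma0; positivity

set_option maxHeartbeats 1000000 in
/-- Lemma: negative drift of `log g₀`.  With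
`L₀ = 5√(2π)`, for `n` large enough, `(log g₀)'(x) ≤ -x/2` for every
`x ∈ [0, √(2 log(λ₀/L₀))]`. -/
theorem log_g0_deriv_negative_drift :
    ∃ N0 : ℕ, ∀ n : ℕ, N0 ≤ n →
      ∀ x ∈ Set.Icc (0 : ℝ)
          (Real.sqrt (2 * Real.log (lam0 n / (5 * Real.sqrt (2 * Real.pi))))),
        deriv (fun y => Real.log (g0 n y)) x ≤ -x / 2 := by
  refine ⟨100, fun n hn x hx => ?_⟩
  obtain ⟨hx0, hxU⟩ := hx
  have hs2 : (2:ℝ) ≤ Real.sqrt (2 * Real.pi) := sqrt_two_pi_ge_two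
  have hn100 : (100:ℝ) ≤ (n:ℝ) := by exact_mod_cast hn
  have hl : (1000:ℝ) ≤ lam0 n := by unfold lam0; nlinarith
  have hl0 : (0:ℝ) < lam0 n := by linarith
  set l := lam0 n with hldef
  -- upper bound on x
  have hxl : x ≤ l / 2 := by
    have harg : lam0 n / (5 * Real.sqrt (2 * Real.pi)) = (n:ℝ) := by
      unfold lam0
      exact mul_div_cancel_left₀ _ (by positivity)
    rw [harg] at hxU
    have hlogn : Real.log (n:ℝ) ≤ (n:ℝ) - 1 := Real.log_le_sub_one_of_pos (by linarith)
    have h2n : 2 * Real.log (n:ℝ) ≤ ((n:ℝ))^2 := by nlinarith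
    have hxn : x ≤ (n:ℝ) := by
      calc x ≤ Real.sqrt (2 * Real.log (n:ℝ)) := hxU
        _ ≤ Real.sqrt (((n:ℝ))^2) := Real.sqrt_le_sqrt h2n
        _ = (n:ℝ) := Real.sqrt_sq (by linarith)
    have : 2 * (n:ℝ) ≤ l := by rw [hldef]; unfold lam0; nlinarith
    linarith
  -- continuity and basic facts
  have hγc : Continuous (gamma0 n) := by
    unfold gamma0
    exact continuous_const.mul ((continuous_const.mul continuous_abs).rexp)
  have hγnn : ∀ u, 0 ≤ gamma0 n u := gamma0_nonneg n
  have hγeq : ∀ u : ℝ, gamma0 n u = l/2 * Real.exp (-l * |u|) := fun u => rfl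
  have hγint : Integrable (fun u => gamma0 n u) := by
    have h := (integrable_eab hl0).const_mul (l/2)
    exact h.congr (ae_of_all _ fun u => (hγeq u).symm)
  -- generic integrability criterion
  have hint : ∀ (ψ : ℝ → ℝ) (C : ℝ), Continuous ψ → (∀ u, |ψ u| ≤ C * Real.exp |u|) →
      Integrable (fun u => ψ u * gamma0 n u) := by
    intro ψ C hc hb
    apply Integrable.mono' (((integrable_eab (b := l - 1) (by linarith)).const_mul (C * (l/2))))
      ((hc.mul hγc).aestronglyMeasurable)
    refine ae_of_all _ fun u => ?_
    rw [norm_eq_abs, Pi.mul_apply, abs_mul, abs_of_nonneg (hγnn u), hγeq u]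
    have hcomb : (C * Real.exp |u|) * (l/2 * Real.exp (-l * |u|))
        = C * (l/2) * Real.exp (-(l-1) * |u|) := by
      rw [show C * Real.exp |u| * (l/2 * Real.exp (-l*|u|))
          = C * (l/2) * (Real.exp |u| * Real.exp (-l*|u|)) from by ring, ← Real.exp_add]
      congr 2
      ring
    calc |ψ u| * (l/2 * Real.exp (-l*|u|))
        ≤ (C * Real.exp |u|) * (l/2 * Real.exp (-l*|u|)) :=
          mul_le_mul_of_nonneg_right (hb u) (by positivity)
      _ = C * (l/2) * Real.exp (-(l-1)*|u|) := hcomb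
  -- the individual integrabilities
  have hφc1 : Continuous (fun u : ℝ => phi (x - u)) :=
    continuous_phi.comp (continuous_const.sub continuous_id)
  have hφc2 : Continuous (fun u : ℝ => phi (x + u)) :=
    continuous_phi.comp (continuous_const.add continuous_id)
  have int1 : Integrable (fun u => phi (x - u) * gamma0 n u) := by
    apply hint _ 1 hφc1
    intro u
    show |phi (x - u)| ≤ 1 * Real.exp |u|
    rw [abs_of_nonneg (phi_pos _).le, one_mul]
    exact (phi_le_one _).trans (Real.one_le_exp (abs_nonneg u))
  have int2 : Integrable (fun u => u * phi (x - u) * gamma0 n u) := by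
    apply hint _ 1 (continuous_id.mul hφc1)
    intro u
    show |u * phi (x - u)| ≤ 1 * Real.exp |u|
    rw [abs_mul, abs_of_nonneg (phi_pos _).le, one_mul]
    nlinarith [abs_le_exp_abs u, phi_le_one (x - u), phi_pos (x - u), abs_nonneg u]
  have int2' : Integrable (fun u => -u * phi (x + u) * gamma0 n u) := by
    apply hint _ 1 (continuous_id.neg.mul hφc2)
    intro u
    show |(-u) * phi (x + u)| ≤ 1 * Real.exp |u|
    rw [abs_mul, abs_neg, abs_of_nonneg (phi_pos _).le, one_mul]
    nlinarith [abs_le_exp_abs u, phi_le_one (x + u), phi_pos (x + u), abs_nonneg u]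
  have int3 : Integrable (fun u => u^2 * phi (x - u) * gamma0 n u) := by
    apply hint _ 4 ((continuous_pow 2).mul hφc1)
    intro u
    show |u^2 * phi (x - u)| ≤ 4 * Real.exp |u|
    rw [abs_mul, abs_of_nonneg (sq_nonneg u), abs_of_nonneg (phi_pos _).le]
    have h := sq_le_four_mul_exp (t := |u|) (abs_nonneg u)
    nlinarith [phi_le_one (x - u), phi_pos (x - u), sq_nonneg u, sq_abs u]
  have int3' : Integrable (fun u => u^2 * phi (x + u) * gamma0 n u) := by
    apply hint _ 4 ((continuous_pow 2).mul hφc2)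
    intro u
    show |u^2 * phi (x + u)| ≤ 4 * Real.exp |u|
    rw [abs_mul, abs_of_nonneg (sq_nonneg u), abs_of_nonneg (phi_pos _).le]
    have h := sq_le_four_mul_exp (t := |u|) (abs_nonneg u)
    nlinarith [phi_le_one (x + u), phi_pos (x + u), sq_nonneg u, sq_abs u]
  have intL : Integrable (fun u => (u * (phi (x - u) - phi (x + u))) * gamma0 n u) := by
    apply hint _ 2 (continuous_id.mul (hφc1.sub hφc2))
    intro u
    show |u * (phi (x - u) - phi (x + u))| ≤ 2 * Real.exp |u|
    rw [abs_mul]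
    have h1 : |phi (x - u) - phi (x + u)| ≤ 2 := by
      rw [abs_le]
      constructor <;> nlinarith [phi_le_one (x - u), phi_le_one (x + u),
        phi_pos (x - u), phi_pos (x + u)]
    nlinarith [abs_le_exp_abs u, abs_nonneg u, abs_nonneg (phi (x - u) - phi (x + u)),
      Real.exp_pos |u|]
  have intR : Integrable (fun u => (2 * x * u^2 * (phi (x - u) + phi (x + u))) * gamma0 n u) := by
    apply hint _ (16 * x) (((continuous_const.mul (continuous_pow 2)).mul (hφc1.add hφc2)))
    intro u
    show |2 * x * u^2 * (phi (x - u) + phi (x + u))| ≤ 16 * x * Real.exp |u|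
    have hnn : 0 ≤ 2 * x * u^2 * (phi (x - u) + phi (x + u)) := by
      have := phi_pos (x - u); have := phi_pos (x + u); positivity
    rw [abs_of_nonneg hnn]
    have h := sq_le_four_mul_exp (t := |u|) (abs_nonneg u)
    nlinarith [phi_le_one (x - u), phi_le_one (x + u), phi_pos (x - u), phi_pos (x + u),
      sq_abs u, sq_nonneg u, Real.exp_pos |u|, mul_nonneg hx0 (sq_nonneg u)]
  -- derivative of g0
  have hF'bound : ∀ u : ℝ, ∀ y ∈ Metric.ball x 1,
      ‖-(y - u) * phi (y - u) * gamma0 n u‖ ≤ gamma0 n u := by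
    intro u y _
    rw [norm_eq_abs, abs_mul, abs_mul, abs_neg]
    calc |y - u| * |phi (y - u)| * |gamma0 n u| ≤ 1 * |gamma0 n u| := by
          apply mul_le_mul_of_nonneg_right ?_ (abs_nonneg _)
          rw [abs_of_nonneg (phi_pos _).le]
          exact abs_mul_phi_le_one _
      _ = gamma0 n u := by rw [one_mul, abs_of_nonneg (hγnn u)]
  have hderiv := hasDerivAt_integral_of_dominated_loc_of_deriv_le (μ := volume)
      (Metric.ball_mem_nhds x one_pos)
      (F := fun y u => phi (y - u) * gamma0 n u)
      (F' := fun y u => -(y - u) * phi (y - u) * gamma0 n u)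
      (bound := fun u => gamma0 n u)
      (Filter.Eventually.of_forall (fun y =>
        (((continuous_phi.comp (continuous_const.sub continuous_id)).mul hγc).aestronglyMeasurable)))
      int1
      ((((continuous_const.sub continuous_id).neg.mul
        (continuous_phi.comp (continuous_const.sub continuous_id))).mul hγc).aestronglyMeasurable)
      (ae_of_all _ hF'bound)
      hγint
      (ae_of_all _ (fun u y _ => (hasDerivAt_phi_sub u y).mul_const (gamma0 n u)))
  have hg0d : HasDerivAt (g0 n) (∫ u, -(x - u) * phi (x - u) * gamma0 n u) x := hderiv.2
  -- lower bound for g0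
  have hg0lb : phi x / 8 ≤ g0 n x := by
    have heq : ∫ u in Set.Ioc (0:ℝ) 1, gamma0 n u = (1 - Real.exp (-l)) / 2 := by
      rw [← intervalIntegral.integral_of_le (by norm_num : (0:ℝ) ≤ 1)]
      have hcong : ∀ u ∈ Set.uIcc (0:ℝ) 1, gamma0 n u = l/2 * Real.exp (-l * u) := by
        intro u hu
        rw [Set.uIcc_of_le (by norm_num : (0:ℝ) ≤ 1)] at hu
        rw [hγeq u, abs_of_nonneg hu.1]
      rw [intervalIntegral.integral_congr hcong]
      have hftc := intervalIntegral.integral_eq_sub_of_hasDerivAt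
        (a := (0:ℝ)) (b := (1:ℝ))
        (f := fun u : ℝ => -(1/2) * Real.exp (-l * u))
        (f' := fun u : ℝ => l/2 * Real.exp (-l * u)) ?_ ?_
      · rw [hftc]
        norm_num
        ring
      · intro t _
        have h := (((hasDerivAt_id t).const_mul (-l)).exp).const_mul (-(1/2:ℝ))
        convert h using 1 <;> try rfl
        simp
        ring
      · apply Continuous.intervalIntegrable
        exact continuous_const.mul ((continuous_const.mul continuous_id).rexp)
    have hexpl : Real.exp (-l) ≤ 1/2 := by
      have h1 : Real.exp (-l) ≤ Real.exp (-1) := Real.exp_le_exp.mpr (by linarith)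
      have h2 : Real.exp (-1) * Real.exp 1 = 1 := by rw [← Real.exp_add]; norm_num
      have h3 : (2:ℝ) ≤ Real.exp 1 := by nlinarith [Real.add_one_le_exp (1:ℝ)]
      nlinarith [Real.exp_pos (-1:ℝ)]
    have hIγ : (1:ℝ)/4 ≤ ∫ u in Set.Ioc (0:ℝ) 1, gamma0 n u := by
      rw [heq]; linarith
    have hmono1 : ∫ u in Set.Ioc (0:ℝ) 1, phi x / 2 * gamma0 n u
        ≤ ∫ u in Set.Ioc (0:ℝ) 1, phi (x - u) * gamma0 n u := by
      apply setIntegral_mono_on ((hγint.const_mul (phi x / 2)).integrableOn)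
        (int1.integrableOn) measurableSet_Ioc
      intro u hu
      exact mul_le_mul_of_nonneg_right (phi_sub_ge hx0 hu.1.le hu.2) (hγnn u)
    have hmono2 : ∫ u in Set.Ioc (0:ℝ) 1, phi (x - u) * gamma0 n u ≤ g0 n x :=
      setIntegral_le_integral int1 (ae_of_all _ fun u => mul_nonneg (phi_pos _).le (hγnn u))
    have hconst : ∫ u in Set.Ioc (0:ℝ) 1, phi x / 2 * gamma0 n u
        = phi x / 2 * ∫ u in Set.Ioc (0:ℝ) 1, gamma0 n u := integral_const_mul _ _
    have hphipos := phi_pos x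
    have h5 : phi x / 2 * (1/4) ≤ phi x / 2 * ∫ u in Set.Ioc (0:ℝ) 1, gamma0 n u :=
      mul_le_mul_of_nonneg_left hIγ (by positivity)
    calc phi x / 8 = phi x / 2 * (1/4) := by ring
      _ ≤ phi x / 2 * ∫ u in Set.Ioc (0:ℝ) 1, gamma0 n u := h5
      _ = ∫ u in Set.Ioc (0:ℝ) 1, phi x / 2 * gamma0 n u := hconst.symm
      _ ≤ ∫ u in Set.Ioc (0:ℝ) 1, phi (x - u) * gamma0 n u := hmono1
      _ ≤ g0 n x := hmono2
  have hg0pos : 0 < g0 n x :=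
    lt_of_lt_of_le (div_pos (phi_pos x) (by norm_num)) hg0lb
  -- decompose the derivative
  have hD : (∫ u, -(x - u) * phi (x - u) * gamma0 n u)
      = (∫ u, u * phi (x - u) * gamma0 n u) - x * g0 n x := by
    have hfe : (fun u => -(x - u) * phi (x - u) * gamma0 n u)
        = fun u => u * phi (x - u) * gamma0 n u - x * (phi (x - u) * gamma0 n u) := by
      funext u; ring
    rw [hfe, integral_sub int2 (int1.const_mul x), integral_const_mul]
    rfl
  -- symmetrization
  have hIneg : (∫ u, u * phi (x - u) * gamma0 n u)
      = ∫ u, -u * phi (x + u) * gamma0 n u := by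
    have h := integral_neg_eq_self (μ := volume) (fun u => u * phi (x - u) * gamma0 n u)
    rw [← h]
    congr 1
    funext u
    rw [sub_neg_eq_add, gamma0_neg]
  have hJJ : (∫ u, u^2 * phi (x + u) * gamma0 n u)
      = ∫ u, u^2 * phi (x - u) * gamma0 n u := by
    have h := integral_neg_eq_self (μ := volume) (fun u => u^2 * phi (x - u) * gamma0 n u)
    rw [← h]
    congr 1
    funext u
    rw [sub_neg_eq_add, gamma0_neg, neg_pow]
    simp
  have hIle : (∫ u, u * phi (x - u) * gamma0 n u)
      ≤ 2 * x * (∫ u, u^2 * phi (x - u) * gamma0 n u) := by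
    have hsum : (∫ u, u * phi (x - u) * gamma0 n u) + (∫ u, -u * phi (x + u) * gamma0 n u)
        = ∫ u, (u * (phi (x - u) - phi (x + u))) * gamma0 n u := by
      rw [← integral_add int2 int2']
      congr 1; funext u; ring
    have hmono : (∫ u, (u * (phi (x - u) - phi (x + u))) * gamma0 n u)
        ≤ ∫ u, (2 * x * u^2 * (phi (x - u) + phi (x + u))) * gamma0 n u := by
      apply integral_mono intL intR
      intro u
      exact mul_le_mul_of_nonneg_right (key_pointwise hx0 u) (hγnn u)
    have hsplit : (∫ u, (2 * x * u^2 * (phi (x - u) + phi (x + u))) * gamma0 n u)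
        = 2 * x * (∫ u, u^2 * phi (x - u) * gamma0 n u)
          + 2 * x * (∫ u, u^2 * phi (x + u) * gamma0 n u) := by
      have e1 : Integrable (fun u => 2*x*(u^2*phi (x - u)*gamma0 n u)) volume :=
        int3.const_mul (2*x)
      have e2 : Integrable (fun u => 2*x*(u^2*phi (x + u)*gamma0 n u)) volume :=
        int3'.const_mul (2*x)
      rw [show (fun u => (2*x*u^2*(phi (x - u) + phi (x + u))) * gamma0 n u)
          = fun u => 2*x*(u^2*phi (x - u)*gamma0 n u) + 2*x*(u^2*phi (x + u)*gamma0 n u)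
          from funext fun u => by ring,
        integral_add e1 e2, integral_const_mul, integral_const_mul]
    rw [hJJ] at hsplit
    linarith [hsum, hIneg, hmono, hsplit]
  -- bound on the second moment integral
  have hJle : (∫ u, u^2 * phi (x - u) * gamma0 n u) ≤ phi x / 2048 := by
    set c := l - x with hcdef
    have hc2 : l / 2 ≤ c := by rw [hcdef]; linarith
    have hcpos : (0:ℝ) < c := by linarith
    clear_value c
    have hptw : ∀ u, u^2 * phi (x - u) * gamma0 n u
        ≤ (8 * l * phi x / c^2) * Real.exp (-(c/2) * |u|) := by
      intro u
      have h1 : phi (x - u) ≤ phi x * Real.exp (x * |u|) := phi_sub_le hx0 u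
      have h2 : u^2 ≤ 16 / c^2 * Real.exp (c/2 * |u|) := by
        have h := sq_le_four_mul_exp (t := c/2 * |u|) (by positivity)
        rw [div_mul_eq_mul_div, le_div_iff₀ (by positivity : (0:ℝ) < c^2)]
        nlinarith [sq_abs u]
      have hstep : u^2 * phi (x - u) * gamma0 n u
          ≤ (16/c^2 * Real.exp (c/2*|u|)) * (phi x * Real.exp (x*|u|))
            * (l/2 * Real.exp (-l*|u|)) := by
        rw [hγeq u]
        apply mul_le_mul (mul_le_mul h2 h1 (phi_pos _).le (by positivity)) le_rfl
          (by positivity)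
          (mul_nonneg (by positivity) (mul_nonneg (phi_pos x).le (Real.exp_pos _).le))
      calc u^2 * phi (x - u) * gamma0 n u ≤ _ := hstep
        _ = (8 * l * phi x / c^2) * Real.exp (c/2*|u| + x*|u| + -l*|u|) := by
            rw [Real.exp_add, Real.exp_add]; ring
        _ = (8 * l * phi x / c^2) * Real.exp (-(c/2) * |u|) := by
            congr 2
            rw [hcdef]; ring
    have hbig := integral_mono int3
      ((integrable_eab (b := c/2) (by positivity)).const_mul (8*l*phi x/c^2)) hptw
    rw [integral_const_mul, integral_eab (by positivity : (0:ℝ) < c/2)] at hbig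
    have hval : (8*l*phi x/c^2) * (2/(c/2)) = 32*l*phi x/c^3 := by
      field_simp
      ring
    rw [hval] at hbig
    have hcube : (l/2)^3 ≤ c^3 := pow_le_pow_left₀ (by linarith) hc2 3
    have hfin : 32*l*phi x/c^3 ≤ phi x / 2048 := by
      rw [div_le_div_iff₀ (by positivity) (by norm_num : (0:ℝ) < 2048)]
      have h6 : (1000:ℝ)^2 ≤ l^2 := by nlinarith
      have h7 : 65536 * l ≤ l^3 / 8 := by nlinarith
      have h8 := mul_le_mul_of_nonneg_left hcube (phi_pos x).le
      have h9 := mul_le_mul_of_nonneg_left h7 (phi_pos x).le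
      linarith [h8, h9]
    linarith
  -- final assembly
  have hphi8 : phi x ≤ 8 * g0 n x := by linarith
  have hI2 : (∫ u, u * phi (x - u) * gamma0 n u) ≤ 2 * x * (phi x / 2048) :=
    hIle.trans (mul_le_mul_of_nonneg_left hJle (by linarith))
  have hxphi : x * phi x ≤ x * (8 * g0 n x) := mul_le_mul_of_nonneg_left hphi8 hx0
  have hmain : (∫ u, -(x - u) * phi (x - u) * gamma0 n u) ≤ -(x/2) * g0 n x := by
    rw [hD]
    nlinarith [hI2, hxphi, mul_nonneg hx0 hg0pos.le]
  have hfinal := (hg0d.log (ne_of_gt hg0pos)).deriv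
  rw [hfinal, div_le_iff₀ hg0pos]
  linarith [hmain]

end
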